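/- arXiv:1901.07818 — 2 statements merged into one kernel-verified Lean document; each statement's English description precedes it below -/
import Mathlib

section
/- Let Δ be a root system with positive system Δ^+, and let T be an element of the real span such that every simple root takes nonnegative value on −iT, with Δ(u^+) = {α ∈ Δ : α(−iT) > 0} and Δ(l) = {α ∈ Δ : α(T) = 0}, Δ^±(l) = Δ(l) ∩ Δ^±. Define W^1 = {σ ∈ W : Φ_σ ⊆ Δ(u^+)}. If σ ∈ W^1 then σ^{-1}(Δ^+(l)) ⊆ Δ^+ and σ^{-1}(Δ^-(l)) ⊆ Δ^-. -/
open RealInnerProductSpace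

variable {V : Type*} [NormedAddCommGroup V] [InnerProductSpace ℝ V]

/-- A (crystallographic, reduced) root system in a real inner product space. -/
def IsRootSystem (Δ : Set V) : Prop :=
  Δ.Finite ∧ (0 : V) ∉ Δ ∧ Submodule.span ℝ Δ = ⊤ ∧
  (∀ α ∈ Δ, ∀ β ∈ Δ, β - (2 * ⟪β, α⟫ / ⟪α, α⟫) • α ∈ Δ) ∧
  (∀ α ∈ Δ, ∀ β ∈ Δ, ∃ n : ℤ, 2 * ⟪β, α⟫ / ⟪α, α⟫ = (n : ℝ)) ∧
  (∀ α ∈ Δ, ∀ t : ℝ, t • α ∈ Δ → t = 1 ∨ t = -1)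

/-- A base (fundamental root system) of `Δ`. -/
def IsBase (Δ Pi : Set V) : Prop :=
  Pi ⊆ Δ ∧ LinearIndependent ℝ ((↑) : Pi → V) ∧ Submodule.span ℝ Pi = ⊤ ∧
  ∀ β ∈ Δ, ∃ c : Pi →₀ ℤ,
    β = c.sum (fun i n => (n : ℝ) • (i : V)) ∧ ((∀ i, 0 ≤ c i) ∨ (∀ i, c i ≤ 0))

/-- The positive roots determined by a base `Pi`. -/
def posRoots (Δ Pi : Set V) : Set V :=
  {β ∈ Δ | ∃ c : Pi →₀ ℤ, (∀ i, 0 ≤ c i) ∧ β = c.sum (fun i n => (n : ℝ) • (i : V))}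

/-- The Weyl group of `Δ`: the subgroup of linear automorphisms generated by the
reflections along the roots. -/
def weylGroup (Δ : Set V) : Subgroup (V ≃ₗ[ℝ] V) :=
  Subgroup.closure {g | ∃ α ∈ Δ, ∀ x, g x = x - (2 * ⟪x, α⟫ / ⟪α, α⟫) • α}

/-- The inversion set `Φ_w = {β ∈ Δ⁺ | w⁻¹ β ∈ Δ⁻}` of `w`. -/
def inversions (Δp : Set V) (w : V ≃ₗ[ℝ] V) : Set V :=
  {β ∈ Δp | w.symm β ∈ -Δp}


lemma weyl_mem_image (Δ : Set V) (hΔ : IsRootSystem Δ) {σ : V ≃ₗ[ℝ] V}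
    (hσ : σ ∈ weylGroup Δ) : ∀ β ∈ Δ, σ β ∈ Δ ∧ σ.symm β ∈ Δ := by
  induction hσ using Subgroup.closure_induction with
  | mem g hg =>
    obtain ⟨α, hα, hgx⟩ := hg
    have hα0 : α ≠ 0 := fun h => hΔ.2.1 (h ▸ hα)
    have hαα : ⟪α, α⟫ ≠ 0 := fun h => hα0 ((inner_self_eq_zero (𝕜 := ℝ)).mp h)
    have key : ∀ x, g (g x) = x := by
      intro x
      have hc : 2 * ⟪x - (2 * ⟪x, α⟫ / ⟪α, α⟫) • α, α⟫ / ⟪α, α⟫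
          = -(2 * ⟪x, α⟫ / ⟪α, α⟫) := by
        rw [inner_sub_left, real_inner_smul_left]
        field_simp
        ring
      rw [hgx, hgx, hc, neg_smul, sub_neg_eq_add, sub_add_cancel]
    have hsymm : ∀ x, g.symm x = g x := by
      intro x
      conv_lhs => rw [← key x]
      rw [LinearEquiv.symm_apply_apply]
    intro β hβ
    constructor
    · rw [hgx]; exact hΔ.2.2.2.1 α hα β hβ
    · rw [hsymm, hgx]; exact hΔ.2.2.2.1 α hα β hβ
  | one => intro β hβ; simpa using ⟨hβ, hβ⟩
  | mul x y _ _ hx hy =>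
    intro β hβ
    constructor
    · exact (hx _ (hy β hβ).1).1
    · exact (hy _ (hx β hβ).2).2
  | inv x _ hx =>
    intro β hβ
    exact ⟨(hx β hβ).2, (hx β hβ).1⟩

lemma root_pos_or_neg (Δ Pi : Set V) (hΔ : IsRootSystem Δ) (hPi : IsBase Δ Pi)
    {β : V} (hβ : β ∈ Δ) : β ∈ posRoots Δ Pi ∨ β ∈ -(posRoots Δ Pi) := by
  have hneg : -β ∈ Δ := by
    have hββ : ⟪β, β⟫ ≠ 0 :=
      fun h => hΔ.2.1 (((inner_self_eq_zero (𝕜 := ℝ)).mp h) ▸ hβ)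
    have := hΔ.2.2.2.1 β hβ β hβ
    have h2 : 2 * ⟪β, β⟫ / ⟪β, β⟫ = (2 : ℝ) := by field_simp
    rw [h2] at this
    have h3 : β - (2 : ℝ) • β = -β := by
      rw [two_smul]; abel
    rwa [h3] at this
  obtain ⟨c, hcsum, hsign⟩ := hPi.2.2.2 β hβ
  rcases hsign with hpos | hneg'
  · exact Or.inl ⟨hβ, c, hpos, hcsum⟩
  · right
    rw [Set.mem_neg]
    refine ⟨hneg, -c, fun i => by simpa using hneg' i, ?_⟩
    have : (-c).sum (fun i n => (n : ℝ) • (i : V))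
        = - c.sum (fun i n => (n : ℝ) • (i : V)) := by
      rw [Finsupp.sum, Finsupp.sum, Finsupp.support_neg, ← Finset.sum_neg_distrib]
      refine Finset.sum_congr rfl fun i _ => ?_
      simp [neg_smul]
    rw [this, hcsum]

/-- **Proposition 2.17(2).** In the Kostant setting—`t` a vector (playing the
role of `-iT`) with `⟪α, t⟫ ≥ 0` for every simple root `α`, `Δ(u⁺) = {α ∈ Δ : ⟪α, t⟫ > 0}`,
`Δ(l) = {α ∈ Δ : ⟪α, t⟫ = 0}`—if `σ` belongs to
`W¹ = {σ ∈ W : Φ_σ ⊆ Δ(u⁺)}` then `σ⁻¹(Δ⁺(l)) ⊆ Δ⁺` and `σ⁻¹(Δ⁻(l)) ⊆ Δ⁻`. -/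
theorem minimal_coset_rep_preserves_levi_signs [FiniteDimensional ℝ V]
    (Δ Pi : Set V) (hΔ : IsRootSystem Δ) (hPi : IsBase Δ Pi)
    (t : V) (ht : ∀ α ∈ Pi, 0 ≤ ⟪α, t⟫)
    (σ : V ≃ₗ[ℝ] V) (hσ : σ ∈ weylGroup Δ)
    (hσ1 : inversions (posRoots Δ Pi) σ ⊆ {α ∈ Δ | 0 < ⟪α, t⟫}) :
    σ.symm '' ({α ∈ Δ | ⟪α, t⟫ = 0} ∩ posRoots Δ Pi) ⊆ posRoots Δ Pi ∧
    σ.symm '' ({α ∈ Δ | ⟪α, t⟫ = 0} ∩ (-(posRoots Δ Pi))) ⊆ -(posRoots Δ Pi) := by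
  have key : ∀ β ∈ Δ, ⟪β, t⟫ = 0 → β ∈ posRoots Δ Pi → σ.symm β ∈ posRoots Δ Pi := by
    intro β hβΔ hβt hβp
    rcases root_pos_or_neg Δ Pi hΔ hPi (weyl_mem_image Δ hΔ hσ β hβΔ).2 with h | h
    · exact h
    · exfalso
      have hinv : β ∈ inversions (posRoots Δ Pi) σ := ⟨hβp, h⟩
      obtain ⟨-, hlt⟩ := hσ1 hinv
      rw [hβt] at hlt
      exact lt_irrefl 0 hlt
  constructor
  · rintro x ⟨β, ⟨⟨hβΔ, hβt⟩, hβp⟩, rfl⟩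
    exact key β hβΔ hβt hβp
  · rintro x ⟨β, ⟨⟨hβΔ, hβt⟩, hβn⟩, rfl⟩
    rw [Set.mem_neg] at hβn ⊢
    have hγΔ : -β ∈ Δ := hβn.1
    have hγt : ⟪-β, t⟫ = 0 := by rw [inner_neg_left, hβt, neg_zero]
    have := key (-β) hγΔ hγt hβn
    simpa using this
end

section
/- With Δ, Δ^+, T, W, W^1, Φ_σ as in the Kostant setting and κ the longest element of W, for σ ∈ W^1 define Δ_σ = {γ ∈ Φ_{σ^{-1}κ} : σγ ∈ Δ(u^+)}. Then σ(Δ_σ) = Δ(u^+) \ Φ_σ; in particular |Δ_σ| = |Δ(u^+)| − |Φ_σ|. -/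
open RealInnerProductSpace

variable {V : Type*} [NormedAddCommGroup V] [InnerProductSpace ℝ V]

/-- Elements of the Weyl group permute the roots. -/
lemma weyl_image_eq {Δ : Set V} (hΔ : IsRootSystem Δ) {g : V ≃ₗ[ℝ] V}
    (hg : g ∈ weylGroup Δ) : g '' Δ = Δ := by
  induction hg using Subgroup.closure_induction with
  | mem g hg =>
      obtain ⟨α, hα, hfor⟩ := hg
      have hαα : ⟪α, α⟫ ≠ 0 :=
        inner_self_ne_zero.2 (fun h => hΔ.2.1 (h ▸ hα))
      have hsub : g '' Δ ⊆ Δ := by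
        rintro _ ⟨β, hβ, rfl⟩
        rw [hfor β]
        exact hΔ.2.2.2.1 α hα β hβ
      refine hsub.antisymm fun β hβ => ?_
      have h1 : ⟪g β, α⟫ = -⟪β, α⟫ := by
        rw [hfor β, inner_sub_left, real_inner_smul_left]
        field_simp
        ring
      have hinv : g (g β) = β := by
        have h2 : 2 * ⟪g β, α⟫ / ⟪α, α⟫ = -(2 * ⟪β, α⟫ / ⟪α, α⟫) := by
          rw [h1]; ring
        rw [hfor (g β), h2, hfor β, neg_smul, sub_neg_eq_add]
        abel
      exact ⟨g β, hsub ⟨β, hβ, rfl⟩, hinv⟩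
  | one => simp
  | mul x y hx hy hx' hy' =>
      have h : ⇑(x * y) = ⇑x ∘ ⇑y := rfl
      rw [h, Set.image_comp, hy', hx']
  | inv x hx hx' =>
      conv_lhs => rw [← hx', ← Set.image_comp]
      have h : (⇑x⁻¹ ∘ ⇑x) = id := funext fun v => x.symm_apply_apply v
      rw [h, Set.image_id]

lemma weyl_maps_root {Δ : Set V} (hΔ : IsRootSystem Δ) {g : V ≃ₗ[ℝ] V}
    (hg : g ∈ weylGroup Δ) {β : V} (hβ : β ∈ Δ) : g β ∈ Δ := by
  rw [← weyl_image_eq hΔ hg]; exact ⟨β, hβ, rfl⟩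

lemma neg_root_mem {Δ : Set V} (hΔ : IsRootSystem Δ) {β : V} (hβ : β ∈ Δ) : -β ∈ Δ := by
  have hb : ⟪β, β⟫ ≠ 0 := inner_self_ne_zero.2 (fun h => hΔ.2.1 (h ▸ hβ))
  have h := hΔ.2.2.2.1 β hβ β hβ
  have h2 : 2 * ⟪β, β⟫ / ⟪β, β⟫ = 2 := by field_simp
  rwa [h2, two_smul, sub_add_eq_sub_sub, sub_self, zero_sub] at h

lemma finsuppZ_sum_eq {Pi : Set V} (c : Pi →₀ ℤ) :
    c.sum (fun i n => (n : ℝ) • (i : V)) =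
      Finsupp.linearCombination ℝ ((↑) : Pi → V)
        (c.mapRange (fun n : ℤ => (n : ℝ)) (by norm_num)) := by
  rw [Finsupp.linearCombination_apply, Finsupp.sum_mapRange_index (fun i => by simp)]

/-- A root cannot be both positive and negative. -/
lemma pos_neg_disjoint {Δ Pi : Set V} (hΔ : IsRootSystem Δ) (hPi : IsBase Δ Pi)
    {β : V} (hβ : β ∈ posRoots Δ Pi) : -β ∉ posRoots Δ Pi := by
  rintro ⟨hβΔ', c', hc', hsum'⟩
  obtain ⟨hβΔ, c, hc, hsum⟩ := hβ
  set f : ℤ → ℝ := fun n : ℤ => (n : ℝ) with hf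
  have hf0 : f 0 = 0 := by norm_num
  have hadd : ∀ a b : ℤ, f (a + b) = f a + f b := fun a b => by push_cast [hf]; ring
  have key : Finsupp.linearCombination ℝ ((↑) : Pi → V)
      ((c + c').mapRange f hf0) = 0 := by
    rw [Finsupp.mapRange_add hadd, map_add, ← finsuppZ_sum_eq, ← finsuppZ_sum_eq,
      ← hsum, ← hsum']
    abel
  have hzero := linearIndependent_iff.1 hPi.2.1 _ key
  have hci : ∀ i, c i = 0 := by
    intro i
    have : ((c + c').mapRange f hf0) i = 0 := by rw [hzero]; rfl
    have h2 : c i + c' i = 0 := by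
      have : ((c i + c' i : ℤ) : ℝ) = 0 := by
        simpa [Finsupp.mapRange_apply, hf] using this
      exact_mod_cast this
    have := hc i
    have := hc' i
    omega
  have : β = 0 := by
    rw [hsum, Finsupp.sum]
    refine Finset.sum_eq_zero fun i _ => ?_
    rw [hci i]; simp
  exact hΔ.2.1 (this ▸ hβΔ)

/-- Every root is positive or negative. -/
lemma pos_neg_total {Δ Pi : Set V} (hΔ : IsRootSystem Δ) (hPi : IsBase Δ Pi)
    {β : V} (hβ : β ∈ Δ) : β ∈ posRoots Δ Pi ∨ -β ∈ posRoots Δ Pi := by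
  obtain ⟨c, hsum, hpos | hneg⟩ := hPi.2.2.2 β hβ
  · exact Or.inl ⟨hβ, c, hpos, hsum⟩
  · refine Or.inr ⟨neg_root_mem hΔ hβ, -c, fun i => by simpa using hneg i, ?_⟩
    have h : (-c).sum (fun i n => (n : ℝ) • (i : V)) =
        - c.sum (fun i n => (n : ℝ) • (i : V)) := by
      rw [Finsupp.sum, Finsupp.sum, Finsupp.support_neg, ← Finset.sum_neg_distrib]
      exact Finset.sum_congr rfl fun i _ => by simp
    rw [h, ← hsum]
  
/-- Roots strictly positive on `t` are positive roots. -/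
lemma u_subset_pos {Δ Pi : Set V} (hΔ : IsRootSystem Δ) (hPi : IsBase Δ Pi)
    {t : V} (ht : ∀ α ∈ Pi, 0 ≤ ⟪α, t⟫) :
    {α ∈ Δ | 0 < ⟪α, t⟫} ⊆ posRoots Δ Pi := by
  rintro α ⟨hαΔ, hαt⟩
  obtain ⟨c, hsum, hpos | hneg⟩ := hPi.2.2.2 α hαΔ
  · exact ⟨hαΔ, c, hpos, hsum⟩
  · exfalso
    have h : ⟪α, t⟫ ≤ 0 := by
      rw [hsum, Finsupp.sum, sum_inner]
      refine Finset.sum_nonpos fun i _ => ?_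
      rw [real_inner_smul_left]
      exact mul_nonpos_iff.2 (Or.inr ⟨by exact_mod_cast hneg i, ht i i.2⟩)
    linarith

/-- **proof of Proposition 2.18(1).** With `κ` the longest element of the
Weyl group and `σ ∈ W¹`, for `Δ_σ = {γ ∈ Φ_{σ⁻¹κ} : σγ ∈ Δ(u⁺)}` one has
`σ(Δ_σ) = Δ(u⁺) \ Φ_σ`; in particular `|Δ_σ| = |Δ(u⁺)| − |Φ_σ|`. -/
theorem sigma_image_deltaSigma [FiniteDimensional ℝ V]
    (Δ Pi : Set V) (hΔ : IsRootSystem Δ) (hPi : IsBase Δ Pi)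
    (t : V) (ht : ∀ α ∈ Pi, 0 ≤ ⟪α, t⟫)
    (κ : V ≃ₗ[ℝ] V) (hκ : κ ∈ weylGroup Δ)
    (hκlong : κ '' (-(posRoots Δ Pi)) = posRoots Δ Pi)
    (σ : V ≃ₗ[ℝ] V) (hσ : σ ∈ weylGroup Δ)
    (hσ1 : inversions (posRoots Δ Pi) σ ⊆ {α ∈ Δ | 0 < ⟪α, t⟫}) :
    σ '' {γ ∈ inversions (posRoots Δ Pi) (σ⁻¹ * κ) | σ γ ∈ {α ∈ Δ | 0 < ⟪α, t⟫}} =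
      {α ∈ Δ | 0 < ⟪α, t⟫} \ inversions (posRoots Δ Pi) σ ∧
    {γ ∈ inversions (posRoots Δ Pi) (σ⁻¹ * κ) | σ γ ∈ {α ∈ Δ | 0 < ⟪α, t⟫}}.ncard =
      {α ∈ Δ | 0 < ⟪α, t⟫}.ncard - (inversions (posRoots Δ Pi) σ).ncard := by
  set P := posRoots Δ Pi with hP
  set U := {α ∈ Δ | 0 < ⟪α, t⟫} with hU
  have hUP : U ⊆ P := u_subset_pos hΔ hPi ht
  have hUΔ : U ⊆ Δ := fun α hα => hα.1
  -- κ⁻¹ sends positive roots to negative roots and back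
  have hκiff : ∀ α : V, κ.symm α ∈ -P ↔ α ∈ P := by
    intro α
    constructor
    · intro h
      have : α = κ (κ.symm α) := (κ.apply_symm_apply α).symm
      rw [this, ← hκlong]
      exact ⟨κ.symm α, h, rfl⟩
    · intro h
      rw [← hκlong] at h
      obtain ⟨x, hx, rfl⟩ := h
      rwa [κ.symm_apply_apply]
  -- the key identity for (σ⁻¹ * κ).symm
  have hws : ∀ γ : V, (σ⁻¹ * κ).symm γ = κ.symm (σ γ) := fun γ => rfl
  have hset : σ '' {γ ∈ inversions P (σ⁻¹ * κ) | σ γ ∈ U} = U \ inversions P σ := by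
    ext α
    constructor
    · rintro ⟨γ, ⟨⟨hγP, hγκ⟩, hγU⟩, rfl⟩
      refine ⟨hγU, fun hinv => ?_⟩
      have hσγ : σ.symm (σ γ) ∈ -P := hinv.2
      rw [σ.symm_apply_apply] at hσγ
      exact pos_neg_disjoint hΔ hPi hγP hσγ
    · rintro ⟨hαU, hαinv⟩
      have hαP : α ∈ P := hUP hαU
      have hγΔ : σ.symm α ∈ Δ := by
        have := weyl_maps_root hΔ (inv_mem hσ) (hUΔ hαU)
        exact this
      have hγP : σ.symm α ∈ P := by
        rcases pos_neg_total hΔ hPi hγΔ with h | h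
        · exact h
        · exact absurd ⟨hαP, h⟩ hαinv
      refine ⟨σ.symm α, ⟨⟨hγP, ?_⟩, ?_⟩, σ.apply_symm_apply α⟩
      · rw [hws, σ.apply_symm_apply]
        exact (hκiff α).2 hαP
      · rw [σ.apply_symm_apply]; exact hαU
  refine ⟨hset, ?_⟩
  have hUfin : U.Finite := hΔ.1.subset hUΔ
  have hcard : ({γ ∈ inversions P (σ⁻¹ * κ) | σ γ ∈ U}).ncard =
      (σ '' {γ ∈ inversions P (σ⁻¹ * κ) | σ γ ∈ U}).ncard :=
    (Set.ncard_image_of_injective _ σ.injective).symm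
  rw [hcard, hset, Set.ncard_diff hσ1 (hUfin.subset hσ1)]
end
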